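/- For κ ∈ [0,1) and p ∈ (0,1), let Q_p(z) = ((1−p)+(p−κ)z)/((1−pκ)−κ(1−p)z). Then for all p₁, p₂ ∈ (0,1) and all z ∈ [0,1], Q_{p₁}(Q_{p₂}(z)) = Q_{p₁·p₂}(z). In particular the family {Q_p : p ∈ (0,1)} forms a commutative semigroup under composition. -/

import Mathlib

/-- The probability generating function of the modified geometric
distribution `𝒢(p,κ)`. -/
noncomputable def modGeomPGF (κ p z : ℝ) : ℝ :=
  ((1 - p) + (p - κ) * z) / ((1 - p * κ) - κ * (1 - p) * z)

lemma modGeom_denom_pos {κ p z : ℝ} (hκ0 : 0 ≤ κ) (hκ1 : κ < 1)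
    (hp0 : 0 < p) (hp1 : p ≤ 1) (hz0 : 0 ≤ z) (hz1 : z ≤ 1) :
    0 < (1 - p * κ) - κ * (1 - p) * z := by
  have hk : 0 ≤ κ * (1 - p) := mul_nonneg hκ0 (by linarith)
  have h1 : κ * (1 - p) * z ≤ κ * (1 - p) := mul_le_of_le_one_right hk hz1
  nlinarith

/-- The modified geometric thinning operators form a commutative semigroup
under composition: `Q_{p₁} ∘ Q_{p₂} = Q_{p₁ p₂}`. -/
theorem modGeomPGF_comp (κ : ℝ) (hκ : κ ∈ Set.Ico (0 : ℝ) 1)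
    (p₁ p₂ : ℝ) (h₁ : p₁ ∈ Set.Ioo (0 : ℝ) 1) (h₂ : p₂ ∈ Set.Ioo (0 : ℝ) 1)
    (z : ℝ) (hz : z ∈ Set.Icc (0 : ℝ) 1) :
    modGeomPGF κ p₁ (modGeomPGF κ p₂ z) = modGeomPGF κ (p₁ * p₂) z := by
  obtain ⟨hκ0, hκ1⟩ := hκ
  obtain ⟨hp10, hp11⟩ := h₁
  obtain ⟨hp20, hp21⟩ := h₂
  obtain ⟨hz0, hz1⟩ := hz
  have hD2 : 0 < (1 - p₂ * κ) - κ * (1 - p₂) * z :=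
    modGeom_denom_pos hκ0 hκ1 hp20 hp21.le hz0 hz1
  have hD12 : 0 < (1 - p₁ * p₂ * κ) - κ * (1 - p₁ * p₂) * z := by
    have hp : 0 < p₁ * p₂ := mul_pos hp10 hp20
    have hp' : p₁ * p₂ ≤ 1 := by nlinarith
    exact modGeom_denom_pos hκ0 hκ1 hp hp' hz0 hz1
  have houter : (1 - p₁ * κ) - κ * (1 - p₁) *
      (((1 - p₂) + (p₂ - κ) * z) / ((1 - p₂ * κ) - κ * (1 - p₂) * z)) ≠ 0 := by
    rw [sub_ne_zero]
    intro h
    have h' : (1 - p₁ * κ) * ((1 - p₂ * κ) - κ * (1 - p₂) * z)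
        = κ * (1 - p₁) * ((1 - p₂) + (p₂ - κ) * z) := by
      rw [mul_div_assoc', eq_div_iff hD2.ne'] at h
      linarith [h]
    nlinarith [h', hD12, hκ1]
  unfold modGeomPGF
  rw [div_eq_div_iff houter hD12.ne']
  linear_combination p₁ * (1 - κ) * (div_mul_cancel₀ ((1 - p₂) + (p₂ - κ) * z) hD2.ne')
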